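/- Let m ≥ 1, t₁,…,t_m be real numbers, cₖ := (2k)!/(2^{2k}(k!)²), and let u : ℝ → ℝ be differentiable at t₀ and satisfy Σ_{j=1}^{m} tⱼ·cⱼ·u(t)^{2j} = −t for all t in a neighborhood of t₀. Fix z₀ > 0 with z₀² < u(t₀)². Define X(z,t) := √(u(t)² − z²) and Y(z,t) := z · Σ_{j=1}^{m} tⱼ·Σ_{k=0}^{j−1} cₖ·X(z,t)^{2(j−k)−1}·u(t)^{2k}. Then at the point (z₀, t₀) the partial derivatives ∂ₜY, ∂_zX, ∂_zY, ∂ₜX exist and satisfy (∂ₜY)·(∂_zX) − (∂_zY)·(∂ₜX) = 1. -/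

import Mathlib

/-- The normalized central binomial coefficient cₖ = (2k)!/(2^{2k}(k!)²). -/
noncomputable def cGD (k : ℕ) : ℝ :=
  (Nat.factorial (2 * k) : ℝ) / (2 ^ (2 * k) * (Nat.factorial k : ℝ) ^ 2)

lemma cGD_succ (k : ℕ) : cGD (k+1) = cGD k * (2*k+1) / (2*k+2) := by
  unfold cGD
  have h1 : 2 * (k+1) = (2*k+1)+1 := by ring
  rw [h1, Nat.factorial_succ, Nat.factorial_succ, Nat.factorial_succ]
  have h2 : (Nat.factorial k : ℝ) ≠ 0 := Nat.cast_ne_zero.mpr (Nat.factorial_ne_zero k)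
  have h3 : (Nat.factorial (2*k) : ℝ) ≠ 0 := Nat.cast_ne_zero.mpr (Nat.factorial_ne_zero _)
  have h4 : (2:ℝ) ^ (2*k) ≠ 0 := by positivity
  push_cast
  rw [pow_succ, pow_succ]
  field_simp
  ring

lemma key_telescope (w X : ℝ) (j : ℕ) (hj : 1 ≤ j) :
    w * (∑ k ∈ Finset.range j, cGD k * X ^ (2*(j-k)-1) * w ^ (2*k))
      + (w^2 - X^2) * (∑ k ∈ Finset.range j,
          cGD k * X ^ (2*(j-k)-1) * (((2*k : ℕ) : ℝ) * w ^ (2*k-1)))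
    = X * (((2*j : ℕ) : ℝ) * cGD j * w ^ (2*j-1)) := by
  set f : ℕ → ℝ := fun k => cGD k * ((2*k : ℕ) : ℝ) * w^(2*k-1) * X^(2*(j-k)+1) with hf
  rw [Finset.mul_sum, Finset.mul_sum, ← Finset.sum_add_distrib]
  have hstep : ∀ k ∈ Finset.range j,
      w * (cGD k * X ^ (2*(j-k)-1) * w ^ (2*k))
        + (w^2 - X^2) * (cGD k * X ^ (2*(j-k)-1) * (((2*k : ℕ) : ℝ) * w ^ (2*k-1)))
      = f (k+1) - f k := by
    intro k hk
    rw [Finset.mem_range] at hk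
    obtain ⟨d, hd⟩ : ∃ d, j = k + d + 1 := ⟨j - k - 1, by omega⟩
    subst hd
    have e1 : 2*((k+d+1)-k)-1 = 2*d+1 := by omega
    have e2 : 2*((k+d+1)-k)+1 = 2*d+3 := by omega
    have e3 : 2*((k+d+1)-(k+1))+1 = 2*d+1 := by omega
    simp only [hf, e1, e2, e3]
    match k with
    | 0 =>
      norm_num [cGD, Nat.factorial]
    | (k'+1) =>
      have e4 : 2*(k'+1)-1 = 2*k'+1 := by omega
      have e5 : 2*(k'+1+1)-1 = 2*k'+3 := by omega
      rw [e4, e5, cGD_succ (k'+1)]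
      push_cast
      have : (2:ℝ)*(k'+1)+2 ≠ 0 := by positivity
      field_simp
      ring
  rw [Finset.sum_congr rfl hstep, Finset.sum_range_sub f j]
  have e6 : 2*(j-j)+1 = 1 := by omega
  simp only [hf, e6, Nat.mul_zero, Nat.cast_zero, pow_one]
  ring

/-- The Poisson bracket relation {y, x} = 1 for the parametrization
X(z,t) = √(u(t)² − z²), Y(z,t) = z·Σⱼ tⱼ Σ_{k<j} cₖ X^{2(j−k)−1} u(t)^{2k}
of the spectral curve of the (2m,1) minimal model, where u satisfies the
leading-order string equation Σⱼ tⱼcⱼu(t)^{2j} = −t near t₀: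
the partial derivatives ∂ₜY, ∂_zX, ∂_zY, ∂ₜX exist at (z₀,t₀) and
(∂ₜY)(∂_zX) − (∂_zY)(∂ₜX) = 1. -/
theorem poisson_bracket_relation (m : ℕ) (hm : 1 ≤ m) (tc : ℕ → ℝ) (u : ℝ → ℝ)
    (t₀ z₀ : ℝ) (hu : DifferentiableAt ℝ u t₀)
    (hstring : ∀ᶠ t in nhds t₀,
      ∑ j ∈ Finset.Icc 1 m, tc j * cGD j * u t ^ (2 * j) = -t)
    (hz : 0 < z₀) (hzu : z₀ ^ 2 < u t₀ ^ 2) :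
    ∃ Yt Xz Yz Xt : ℝ,
      HasDerivAt (fun t => z₀ * ∑ j ∈ Finset.Icc 1 m, tc j *
          ∑ k ∈ Finset.range j,
            cGD k * Real.sqrt (u t ^ 2 - z₀ ^ 2) ^ (2 * (j - k) - 1) * u t ^ (2 * k))
        Yt t₀ ∧
      HasDerivAt (fun z => Real.sqrt (u t₀ ^ 2 - z ^ 2)) Xz z₀ ∧
      HasDerivAt (fun z => z * ∑ j ∈ Finset.Icc 1 m, tc j *
          ∑ k ∈ Finset.range j,
            cGD k * Real.sqrt (u t₀ ^ 2 - z ^ 2) ^ (2 * (j - k) - 1) * u t₀ ^ (2 * k))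
        Yz z₀ ∧
      HasDerivAt (fun t => Real.sqrt (u t ^ 2 - z₀ ^ 2)) Xt t₀ ∧
      Yt * Xz - Yz * Xt = 1 := by
  obtain ⟨u', hud⟩ : ∃ d, HasDerivAt u d t₀ := ⟨deriv u t₀, hu.hasDerivAt⟩
  obtain ⟨w, hw⟩ : ∃ w, u t₀ = w := ⟨u t₀, rfl⟩
  rw [hw] at hzu
  rw [hw]
  have hX2 : (0:ℝ) < w^2 - z₀^2 := by linarith
  obtain ⟨X, hX⟩ : ∃ X, Real.sqrt (w^2 - z₀^2) = X := ⟨_, rfl⟩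
  have hXpos : 0 < X := hX ▸ Real.sqrt_pos.mpr hX2
  have hXne : X ≠ 0 := ne_of_gt hXpos
  have hXsq : X^2 = w^2 - z₀^2 := by rw [← hX]; exact Real.sq_sqrt hX2.le
  -- derivative of inner function in t
  have hinner : HasDerivAt (fun t => u t ^ 2 - z₀ ^ 2) (2*w*u') t₀ := by
    have h := (hud.fun_pow 2).sub_const (z₀ ^ 2)
    refine h.congr_deriv (Eq.symm ?_)
    rw [hw]; norm_num
  have hne0 : u t₀ ^ 2 - z₀ ^ 2 ≠ 0 := by rw [hw]; exact ne_of_gt hX2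
  have hsqt : HasDerivAt (fun t => Real.sqrt (u t ^ 2 - z₀ ^ 2)) (w*u'/X) t₀ := by
    have h := (Real.hasDerivAt_sqrt hne0).comp t₀ hinner
    refine h.congr_deriv (Eq.symm ?_)
    simp only [hw, hX]
    field_simp
  -- derivative of sqrt in z
  have hinnz : HasDerivAt (fun z : ℝ => w^2 - z^2) (-(2*z₀)) z₀ := by
    have h := (hasDerivAt_pow 2 z₀).const_sub (w^2)
    refine h.congr_deriv (Eq.symm ?_)
    norm_num
  have hne0' : w^2 - z₀^2 ≠ 0 := ne_of_gt hX2
  have hsqz : HasDerivAt (fun z : ℝ => Real.sqrt (w^2 - z^2)) (-z₀/X) z₀ := by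
    have h := (Real.hasDerivAt_sqrt (by simpa using hne0')).comp z₀ hinnz
    refine h.congr_deriv (Eq.symm ?_)
    simp only [hX]
    field_simp
  -- string equation derivative: u' * D = -1
  have hD : u' * (∑ j ∈ Finset.Icc 1 m, tc j * (cGD j * (((2*j : ℕ):ℝ) * w^(2*j-1)))) = -1 := by
    have hg : HasDerivAt (fun t => ∑ j ∈ Finset.Icc 1 m, tc j * cGD j * u t ^ (2*j))
        (∑ j ∈ Finset.Icc 1 m, tc j * cGD j * (((2*j : ℕ):ℝ) * u t₀ ^ (2*j-1) * u')) t₀ :=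
      HasDerivAt.fun_sum fun j _ => (hud.fun_pow (2*j)).const_mul (tc j * cGD j)
    have hEq : (fun t => ∑ j ∈ Finset.Icc 1 m, tc j * cGD j * u t ^ (2*j))
        =ᶠ[nhds t₀] fun t => -t := hstring
    have hg2 : HasDerivAt (fun t : ℝ => -t)
        (∑ j ∈ Finset.Icc 1 m, tc j * cGD j * (((2*j : ℕ):ℝ) * u t₀ ^ (2*j-1) * u')) t₀ :=
      hg.congr_of_eventuallyEq hEq.symm
    have hg3 : HasDerivAt (fun t : ℝ => -t) (-1) t₀ := (hasDerivAt_id t₀).neg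
    have h4 := hg2.unique hg3
    rw [hw] at h4
    rw [Finset.mul_sum, ← h4]
    exact Finset.sum_congr rfl fun j _ => by ring
  -- per-term derivative in t
  have hterm_t : ∀ j k : ℕ, HasDerivAt
      (fun t => cGD k * Real.sqrt (u t ^ 2 - z₀ ^ 2) ^ (2*(j-k)-1) * u t ^ (2*k))
      (cGD k * (((2*(j-k)-1 : ℕ):ℝ) * X^(2*(j-k)-1-1) * (w*u'/X)) * w^(2*k)
        + cGD k * X^(2*(j-k)-1) * (((2*k : ℕ):ℝ) * w^(2*k-1) * u')) t₀ := by
    intro j k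
    have h := ((hsqt.fun_pow (2*(j-k)-1)).const_mul (cGD k)).fun_mul (hud.fun_pow (2*k))
    refine h.congr_deriv (Eq.symm ?_)
    simp only [hw, hX]
  -- per-term derivative in z
  have hterm_z : ∀ j k : ℕ, HasDerivAt
      (fun z => cGD k * Real.sqrt (w ^ 2 - z ^ 2) ^ (2*(j-k)-1) * w ^ (2*k))
      (cGD k * (((2*(j-k)-1 : ℕ):ℝ) * X^(2*(j-k)-1-1) * (-z₀/X)) * w^(2*k)) z₀ := by
    intro j k
    have h := ((hsqz.fun_pow (2*(j-k)-1)).const_mul (cGD k)).mul_const (w ^ (2*k))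
    refine h.congr_deriv (Eq.symm ?_)
    simp only [hX]
  -- full derivatives
  have hYt : HasDerivAt (fun t => z₀ * ∑ j ∈ Finset.Icc 1 m, tc j *
        ∑ k ∈ Finset.range j,
          cGD k * Real.sqrt (u t ^ 2 - z₀ ^ 2) ^ (2 * (j - k) - 1) * u t ^ (2 * k))
      (z₀ * ∑ j ∈ Finset.Icc 1 m, tc j * ∑ k ∈ Finset.range j,
        (cGD k * (((2*(j-k)-1 : ℕ):ℝ) * X^(2*(j-k)-1-1) * (w*u'/X)) * w^(2*k)
          + cGD k * X^(2*(j-k)-1) * (((2*k : ℕ):ℝ) * w^(2*k-1) * u'))) t₀ :=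
    HasDerivAt.const_mul z₀ (HasDerivAt.fun_sum fun j _ =>
      HasDerivAt.const_mul (tc j) (HasDerivAt.fun_sum fun k _ => hterm_t j k))
  have hYz : HasDerivAt (fun z => z * ∑ j ∈ Finset.Icc 1 m, tc j *
        ∑ k ∈ Finset.range j,
          cGD k * Real.sqrt (w ^ 2 - z ^ 2) ^ (2 * (j - k) - 1) * w ^ (2 * k))
      (1 * (∑ j ∈ Finset.Icc 1 m, tc j * ∑ k ∈ Finset.range j,
          cGD k * X ^ (2*(j-k)-1) * w ^ (2*k))
        + z₀ * ∑ j ∈ Finset.Icc 1 m, tc j * ∑ k ∈ Finset.range j,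
          (cGD k * (((2*(j-k)-1 : ℕ):ℝ) * X^(2*(j-k)-1-1) * (-z₀/X)) * w^(2*k))) z₀ := by
    have h := (hasDerivAt_id z₀).fun_mul (HasDerivAt.fun_sum fun j (_ : j ∈ Finset.Icc 1 m) =>
      HasDerivAt.const_mul (tc j) (HasDerivAt.fun_sum fun k (_ : k ∈ Finset.range j) => hterm_z j k))
    refine h.congr_deriv (Eq.symm ?_)
    simp only [hX, id_eq]
  -- clean sums
  set P := ∑ j ∈ Finset.Icc 1 m, tc j * ∑ k ∈ Finset.range j,
      cGD k * (((2*(j-k)-1 : ℕ):ℝ) * X^(2*(j-k)-1-1)) * w^(2*k) with hP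
  set Q := ∑ j ∈ Finset.Icc 1 m, tc j * ∑ k ∈ Finset.range j,
      cGD k * X ^ (2*(j-k)-1) * (((2*k : ℕ):ℝ) * w^(2*k-1)) with hQ
  set S := ∑ j ∈ Finset.Icc 1 m, tc j * ∑ k ∈ Finset.range j,
      cGD k * X ^ (2*(j-k)-1) * w ^ (2*k) with hS
  set D := ∑ j ∈ Finset.Icc 1 m, tc j * (cGD j * (((2*j : ℕ):ℝ) * w^(2*j-1))) with hDdef
  have hsum_t : (∑ j ∈ Finset.Icc 1 m, tc j * ∑ k ∈ Finset.range j,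
        (cGD k * (((2*(j-k)-1 : ℕ):ℝ) * X^(2*(j-k)-1-1) * (w*u'/X)) * w^(2*k)
          + cGD k * X^(2*(j-k)-1) * (((2*k : ℕ):ℝ) * w^(2*k-1) * u')))
      = (w*u'/X) * P + u' * Q := by
    rw [hP, hQ, Finset.mul_sum, Finset.mul_sum, ← Finset.sum_add_distrib]
    refine Finset.sum_congr rfl fun j _ => ?_
    rw [Finset.sum_add_distrib, mul_add, Finset.mul_sum, Finset.mul_sum,
      Finset.mul_sum, Finset.mul_sum, Finset.mul_sum, Finset.mul_sum]
    congr 1 <;> exact Finset.sum_congr rfl fun k _ => by ring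
  have hsum_z : (∑ j ∈ Finset.Icc 1 m, tc j * ∑ k ∈ Finset.range j,
        (cGD k * (((2*(j-k)-1 : ℕ):ℝ) * X^(2*(j-k)-1-1) * (-z₀/X)) * w^(2*k)))
      = (-z₀/X) * P := by
    rw [hP, Finset.mul_sum]
    refine Finset.sum_congr rfl fun j _ => ?_
    rw [Finset.mul_sum, Finset.mul_sum, Finset.mul_sum]
    exact Finset.sum_congr rfl fun k _ => by ring
  have hQS : w * S + z₀^2 * Q = X * D := by
    rw [hS, hQ, hDdef, Finset.mul_sum, Finset.mul_sum, Finset.mul_sum,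
      ← Finset.sum_add_distrib]
    refine Finset.sum_congr rfl fun j hj => ?_
    have hj1 : 1 ≤ j := (Finset.mem_Icc.mp hj).1
    have hkey := key_telescope w X j hj1
    have hz2 : z₀^2 = w^2 - X^2 := by rw [hXsq]; ring
    rw [hz2]
    linear_combination tc j * hkey
  refine ⟨_, -z₀/X, _, w*u'/X, hYt, hsqz, hYz, hsqt, ?_⟩
  rw [hsum_t, hsum_z]
  have step1 : z₀ * ((w*u'/X) * P + u' * Q) * (-z₀/X) - (1 * S + z₀ * ((-z₀/X) * P)) * (w*u'/X)
      = -(u' * (w * S + z₀^2 * Q)) / X := by field_simp; ring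
  rw [step1, hQS, div_eq_iff hXne]
  linear_combination (-X) * hD
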